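/- Let f, g: S^1 → ℝ^2 be generic functions with f(S^1) = g(S^1). Then the map h: S^1 → S^1 defined by sending θ to the unique θ' with g(θ') = f(θ) when f(θ) is not a double point, and to the unique θ' with g(θ') = f(θ) and im d_{θ'} g = im d_θ f when f(θ) is a double point, is a well-defined C^1-diffeomorphism satisfying g∘h = f. -/

import Mathlib

open Set Real Filter Topology

noncomputable section

abbrev Circ := AddCircle (2 * π)

def liftOf (F : Circ → ℝ × ℝ) : ℝ → ℝ × ℝ := fun t => F (t : Circ)

def IsC1 (F : Circ → ℝ × ℝ) : Prop := ContDiff ℝ 1 (liftOf F)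

def tangentAt (F : Circ → ℝ × ℝ) (t : ℝ) : Submodule ℝ (ℝ × ℝ) :=
  Submodule.span ℝ {deriv (liftOf F) t}

def Generic (F : Circ → ℝ × ℝ) : Prop :=
  IsC1 F ∧ (∀ t : ℝ, deriv (liftOf F) t ≠ 0) ∧
  {p : ℝ × ℝ | ∃ x y : Circ, x ≠ y ∧ F x = p ∧ F y = p}.Finite ∧
  (∀ p : ℝ × ℝ, (∃ x y : Circ, x ≠ y ∧ F x = p ∧ F y = p) →
    ∃ x y : Circ, x ≠ y ∧ {z : Circ | F z = p} = {x, y}) ∧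
  (∀ t₁ t₂ : ℝ, liftOf F t₁ = liftOf F t₂ → tangentAt F t₁ = tangentAt F t₂ →
    (t₁ : Circ) = (t₂ : Circ))

def Dset (u : ℝ × ℝ) : Set (ℝ × ℝ) := {w | w.1 ≤ u.1 ∧ w.2 ≤ u.2}

def persBetti (F : Circ → ℝ × ℝ) (u v : ℝ × ℝ) : ℕ :=
  ((fun x => connectedComponentIn (F ⁻¹' Dset v) x) '' (F ⁻¹' Dset u)).ncard

def Sigma2 : Set ((ℝ × ℝ) → (ℝ × ℝ)) :=
  {id, fun p => (-p.1, p.2), fun p => (p.1, -p.2), fun p => (-p.1, -p.2)}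

def CircleDiffeo (H : Circ → Circ) : Prop :=
  ∃ h : ℝ → ℝ, ContDiff ℝ 1 h ∧ (∀ t, deriv h t ≠ 0) ∧
    ((∀ t, h (t + 2 * π) = h t + 2 * π) ∨ (∀ t, h (t + 2 * π) = h t - 2 * π)) ∧
    (∀ t : ℝ, H (t : Circ) = ((h t : ℝ) : Circ))

def C1dist (F G : Circ → ℝ × ℝ) : ℝ :=
  ⨆ t : ℝ, (‖liftOf F t - liftOf G t‖ + ‖deriv (liftOf F) t - deriv (liftOf G) t‖)

def cross (a b : ℝ × ℝ) : ℝ := a.1 * b.2 - a.2 * b.1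


namespace CDaux

instance factpos : Fact ((0:ℝ) < 2 * π) := ⟨Real.two_pi_pos⟩

lemma liftOf_periodic (F : Circ → ℝ × ℝ) : Function.Periodic (liftOf F) (2 * π) := by
  intro t
  show F _ = F _
  rw [AddCircle.coe_add_period]

lemma deriv_liftOf_periodic (F : Circ → ℝ × ℝ) :
    Function.Periodic (deriv (liftOf F)) (2 * π) := by
  intro t
  have h : (fun x => liftOf F (x + 2 * π)) = liftOf F := funext (liftOf_periodic F)
  calc deriv (liftOf F) (t + 2 * π) = deriv (fun x => liftOf F (x + 2 * π)) t :=
        (deriv_comp_add_const _ _ _).symm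
    _ = deriv (liftOf F) t := by rw [h]

lemma coe_eq_coe_iff {t₁ t₂ : ℝ} :
    (t₁ : Circ) = (t₂ : Circ) ↔ ∃ n : ℤ, n • (2 * π) = t₂ - t₁ := by
  rw [eq_comm, ← sub_eq_zero, ← AddCircle.coe_sub, AddCircle.coe_eq_zero_iff]

lemma deriv_liftOf_coe_eq {F : Circ → ℝ × ℝ} {t₁ t₂ : ℝ} (h : (t₁ : Circ) = (t₂ : Circ)) :
    deriv (liftOf F) t₁ = deriv (liftOf F) t₂ := by
  obtain ⟨n, hn⟩ := coe_eq_coe_iff.mp h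
  have ht : t₁ = t₂ - n • (2 * π) := by rw [hn]; ring
  rw [ht, (deriv_liftOf_periodic F).sub_zsmul_eq]

lemma tangentAt_coe_eq {F : Circ → ℝ × ℝ} {t₁ t₂ : ℝ} (h : (t₁ : Circ) = (t₂ : Circ)) :
    tangentAt F t₁ = tangentAt F t₂ := by
  unfold tangentAt; rw [deriv_liftOf_coe_eq h]

lemma continuous_of_liftOf {F : Circ → ℝ × ℝ} (h : Continuous (liftOf F)) : Continuous F :=
  (QuotientAddGroup.isQuotientMap_mk _).continuous_iff.mpr h

/-- representative in `Ioc (-π) π`. -/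
def θc (z : Circ) : ℝ := (AddCircle.equivIoc (2 * π) (-π) z : ℝ)

lemma coe_θc (z : Circ) : ((θc z : ℝ) : Circ) = z := by
  have h := (AddCircle.equivIoc (2 * π) (-π)).symm_apply_apply z
  conv_rhs => rw [← h]
  rfl

lemma θc_mem (z : Circ) : θc z ∈ Ioc (-π) (-π + 2 * π) :=
  (AddCircle.equivIoc (2 * π) (-π) z).2

lemma neg_pi_ne_zero : ((-π : ℝ) : Circ) ≠ 0 := by
  intro hz
  rw [AddCircle.coe_eq_zero_iff] at hz
  obtain ⟨n, hn⟩ := hz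
  have hπ := Real.pi_pos
  rw [zsmul_eq_mul] at hn
  rcases lt_trichotomy n 0 with h | h | h
  · have h0 : n ≤ -1 := by omega
    have h1 : (n : ℝ) ≤ -1 := by exact_mod_cast h0
    nlinarith
  · rw [h] at hn; push_cast at hn; nlinarith
  · have h1 : (1:ℝ) ≤ (n:ℝ) := by exact_mod_cast h
    nlinarith

lemma θc_continuousAt {z : Circ} (hz : z ≠ (((-π : ℝ)) : Circ)) : ContinuousAt θc z :=
  continuous_subtype_val.continuousAt.comp (AddCircle.continuousAt_equivIoc (2 * π) (-π) hz)

lemma derivC_aux (F : Circ → ℝ × ℝ) (t : ℝ) :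
    deriv (liftOf F) (θc (t : Circ)) = deriv (liftOf F) t :=
  deriv_liftOf_coe_eq (coe_θc _)

/-- the derivative descends to the circle -/
def derivC (F : Circ → ℝ × ℝ) : Circ → ℝ × ℝ := fun z => deriv (liftOf F) (θc z)

lemma derivC_coe (F : Circ → ℝ × ℝ) (t : ℝ) : derivC F (t : Circ) = deriv (liftOf F) t :=
  derivC_aux F t

lemma continuous_derivC {F : Circ → ℝ × ℝ} (h : IsC1 F) : Continuous (derivC F) := by
  apply continuous_of_liftOf
  have heq : liftOf (derivC F) = deriv (liftOf F) := funext fun t => derivC_coe F t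
  rw [heq]
  exact h.continuous_deriv le_rfl

lemma cross_of_mem_span {a b : ℝ × ℝ} (hb : b ∈ Submodule.span ℝ {a}) : cross a b = 0 := by
  rw [Submodule.mem_span_singleton] at hb
  obtain ⟨c, rfl⟩ := hb
  show a.1 * (c • a).2 - a.2 * (c • a).1 = 0
  simp [Prod.smul_snd, Prod.smul_fst, smul_eq_mul]
  ring

lemma mem_span_of_cross {a b : ℝ × ℝ} (ha : a ≠ 0) (h : cross a b = 0) :
    b ∈ Submodule.span ℝ {a} := by
  rw [Submodule.mem_span_singleton]
  have hc : a.1 * b.2 - a.2 * b.1 = 0 := h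
  have h1 : a.1 ≠ 0 ∨ a.2 ≠ 0 := by
    by_contra hcon; push_neg at hcon
    exact ha (Prod.ext hcon.1 hcon.2)
  rcases h1 with h1 | h1
  · refine ⟨b.1 / a.1, Prod.ext ?_ ?_⟩
    · show b.1 / a.1 * a.1 = b.1
      field_simp
    · show b.1 / a.1 * a.2 = b.2
      field_simp
      nlinarith
  · refine ⟨b.2 / a.2, Prod.ext ?_ ?_⟩
    · show b.2 / a.2 * a.1 = b.1
      field_simp
      nlinarith
    · show b.2 / a.2 * a.2 = b.2
      field_simp

lemma span_eq_iff_cross {a b : ℝ × ℝ} (ha : a ≠ 0) (hb : b ≠ 0) :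
    Submodule.span ℝ ({a} : Set (ℝ × ℝ)) = Submodule.span ℝ {b} ↔ cross a b = 0 := by
  constructor
  · intro h
    apply cross_of_mem_span
    rw [h]
    exact Submodule.mem_span_singleton_self b
  · intro h
    apply le_antisymm
    · rw [Submodule.span_le, Set.singleton_subset_iff]
      apply mem_span_of_cross hb
      show b.1 * a.2 - b.2 * a.1 = 0
      have : a.1 * b.2 - a.2 * b.1 = 0 := h
      linarith
    · rw [Submodule.span_le, Set.singleton_subset_iff]
      exact SetLike.mem_coe.mpr (mem_span_of_cross ha h)

lemma coe_ne_zero_of_pos_le_pi {d : ℝ} (h0 : 0 < d) (hle : d ≤ π) : ((d : ℝ) : Circ) ≠ 0 := by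
  intro hz
  rw [AddCircle.coe_eq_zero_iff] at hz
  obtain ⟨n, hn⟩ := hz
  rw [zsmul_eq_mul] at hn
  have hπ := Real.pi_pos
  rcases lt_trichotomy n 0 with h | h | h
  · have h1 : (n : ℝ) ≤ -1 := by exact_mod_cast (by omega : n ≤ -1)
    nlinarith
  · rw [h] at hn; push_cast at hn; nlinarith
  · have h1 : (1:ℝ) ≤ (n:ℝ) := by exact_mod_cast h
    nlinarith

lemma subsingleton_of_coe_zero {s : Set ℝ} (hs : IsPreconnected s)
    (hsub : ∀ y ∈ s, ((y : ℝ) : Circ) = 0) : s.Subsingleton := by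
  have key : ∀ a ∈ s, ∀ b ∈ s, a < b → False := by
    intro a ha b hb hab
    have hIcc : Icc a b ⊆ s := hs.ordConnected.out ha hb
    set z := min b (a + π) with hz
    have hπ := Real.pi_pos
    have hzmem : z ∈ Icc a b := ⟨le_min hab.le (by linarith), min_le_left _ _⟩
    have h1 : ((z : ℝ) : Circ) = 0 := hsub z (hIcc hzmem)
    have h2 : ((a : ℝ) : Circ) = 0 := hsub a ha
    have h3 : ((z - a : ℝ) : Circ) = 0 := by
      rw [AddCircle.coe_sub, h1, h2, sub_zero]
    exact coe_ne_zero_of_pos_le_pi (by simp only [hz, sub_pos, lt_inf_iff]; exact ⟨hab, by linarith⟩) (by have := min_le_right b (a+π); simp only [hz]; linarith) h3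
  intro y₁ h₁ y₂ h₂
  by_contra hne
  rcases lt_or_gt_of_ne hne with h | h
  · exact key y₁ h₁ y₂ h₂ h
  · exact key y₂ h₂ y₁ h₁ h

section LiftMachinery

variable {c : ℝ → Circ}

lemma lift_eqOn {s : Set ℝ} (hs : IsPreconnected s) {h₁ h₂ : ℝ → ℝ}
    (hc₁ : Continuous h₁) (hc₂ : Continuous h₂)
    (hl : ∀ t ∈ s, ((h₁ t : ℝ) : Circ) = ((h₂ t : ℝ) : Circ))
    {x₀ : ℝ} (hx₀ : x₀ ∈ s) (he : h₁ x₀ = h₂ x₀) : Set.EqOn h₁ h₂ s := by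
  have himg : IsPreconnected ((fun t => h₁ t - h₂ t) '' s) :=
    hs.image _ (Continuous.continuousOn (hc₁.sub hc₂))
  have hsub : ∀ y ∈ (fun t => h₁ t - h₂ t) '' s, ((y:ℝ):Circ) = 0 := by
    rintro y ⟨t, ht, rfl⟩
    show ((h₁ t - h₂ t : ℝ) : Circ) = 0
    rw [AddCircle.coe_sub, hl t ht, sub_self]
  have hss := subsingleton_of_coe_zero himg hsub
  intro t ht
  have h0 : (0:ℝ) ∈ (fun t => h₁ t - h₂ t) '' s := ⟨x₀, hx₀, by show h₁ x₀ - h₂ x₀ = 0; rw [he, sub_self]⟩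
  have := hss ⟨t, ht, rfl⟩ h0
  have : h₁ t - h₂ t = 0 := this
  linarith

lemma exists_local_lift (hc : Continuous c) (x₀ : ℝ) :
    ∃ ε > 0, ∃ lam : ℝ → ℝ, ContinuousOn lam (Metric.ball x₀ ε) ∧
      ∀ t ∈ Metric.ball x₀ ε, ((lam t : ℝ) : Circ) = c t := by
  have hUopen : IsOpen {t : ℝ | c t - c x₀ ≠ (((-π:ℝ)) : Circ)} := by
    have : {t : ℝ | c t - c x₀ ≠ (((-π:ℝ)) : Circ)}
        = (fun t => c t - c x₀) ⁻¹' ({(((-π:ℝ)) : Circ)}ᶜ) := rfl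
    rw [this]
    exact (isClosed_singleton.isOpen_compl).preimage (hc.sub continuous_const)
  have hx₀mem : x₀ ∈ {t : ℝ | c t - c x₀ ≠ (((-π:ℝ)) : Circ)} := by
    show c x₀ - c x₀ ≠ _
    rw [sub_self]
    exact fun h => neg_pi_ne_zero h.symm
  obtain ⟨ε, hε, hball⟩ := Metric.isOpen_iff.mp hUopen x₀ hx₀mem
  refine ⟨ε, hε, fun t => θc (c x₀) + θc (c t - c x₀), ?_, ?_⟩
  · intro t ht
    apply ContinuousAt.continuousWithinAt
    apply ContinuousAt.add continuousAt_const
    have hinner : ContinuousAt (fun s => c s - c x₀) t := (hc.sub continuous_const).continuousAt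
    show ContinuousAt (θc ∘ fun s => c s - c x₀) t
    exact ContinuousAt.comp (θc_continuousAt (hball ht)) hinner
  · intro t _
    rw [AddCircle.coe_add, coe_θc, coe_θc]
    abel

lemma lift_Icc (hc : Continuous c) (a b sa : ℝ) (hsa : ((sa : ℝ) : Circ) = c a) :
    ∃ h : ℝ → ℝ, Continuous h ∧ h a = sa ∧ ∀ t ∈ Icc a b, ((h t : ℝ) : Circ) = c t := by
  rcases le_or_gt b a with hba | hab
  · refine ⟨fun _ => sa, continuous_const, rfl, ?_⟩
    intro t ht
    have : t = a := le_antisymm (ht.2.trans hba) ht.1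
    rw [this]; exact hsa
  set S := {x : ℝ | x ∈ Icc a b ∧ ∃ h : ℝ → ℝ, Continuous h ∧ h a = sa ∧
      ∀ t ∈ Icc a x, ((h t:ℝ):Circ) = c t} with hS
  have haS : a ∈ S := ⟨⟨le_refl a, hab.le⟩, fun _ => sa, continuous_const, rfl, by
      intro t ht; have : t = a := le_antisymm ht.2 ht.1; rw [this]; exact hsa⟩
  have hbdd : BddAbove S := ⟨b, fun x hx => hx.1.2⟩
  set u := sSup S with hu
  have hau : a ≤ u := le_csSup hbdd haS
  have hub : u ≤ b := csSup_le ⟨a, haS⟩ (fun x hx => hx.1.2)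
  obtain ⟨ε, hε, lam, hlamc, hlam⟩ := exists_local_lift hc u
  obtain ⟨x, hxS, hxgt⟩ := exists_lt_of_lt_csSup ⟨a, haS⟩ (by linarith : u - ε/2 < u)
  have hxu : x ≤ u := le_csSup hbdd hxS
  obtain ⟨hxI, h₁, h₁c, h₁a, h₁l⟩ := hxS
  set v := min b (u + ε/2) with hv
  have hxv : x ≤ u + ε/2 := by linarith
  set clamp := fun t : ℝ => max x (min t (u + ε/2)) with hclamp
  have hclampc : Continuous clamp := continuous_const.max (continuous_id.min continuous_const)
  have hclampmem : ∀ t, clamp t ∈ Metric.ball u ε := by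
    intro t
    rw [Metric.mem_ball, Real.dist_eq, abs_lt]
    have l1 : x ≤ clamp t := le_max_left _ _
    have l2 : clamp t ≤ u + ε/2 := max_le hxv (min_le_right _ _)
    constructor <;> linarith
  set lam' := fun t => lam (clamp t) with hlam'def
  have hlam'c : Continuous lam' := hlamc.comp_continuous hclampc hclampmem
  have hxball : x ∈ Metric.ball u ε := by
    rw [Metric.mem_ball, Real.dist_eq, abs_lt]; constructor <;> linarith
  set δ := h₁ x - lam x with hδ
  have hδ0 : ((δ:ℝ):Circ) = 0 := by
    rw [hδ, AddCircle.coe_sub, h₁l x ⟨hxI.1, le_refl x⟩, hlam x hxball, sub_self]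
  have hclampx : clamp x = x := by
    rw [hclamp]; simp only; rw [min_eq_left hxv, max_self]
  have hjunc : ∀ t, t = x → h₁ t = lam' t + δ := by
    intro t ht; subst ht
    rw [hlam'def]; simp only; rw [hclampx, hδ]; ring
  set h₂ := fun t => if t ≤ x then h₁ t else lam' t + δ with hh₂
  have hh₂c : Continuous h₂ :=
    Continuous.if_le h₁c (hlam'c.add continuous_const) continuous_id continuous_const hjunc
  have hh₂a : h₂ a = sa := by
    rw [hh₂]; simp only; rw [if_pos hxI.1]; exact h₁a
  have hlift : ∀ t ∈ Icc a v, ((h₂ t:ℝ):Circ) = c t := by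
    intro t ht
    rw [hh₂]; simp only
    by_cases hxle : t ≤ x
    · rw [if_pos hxle]; exact h₁l t ⟨ht.1, hxle⟩
    · push_neg at hxle
      rw [if_neg (not_le.mpr hxle)]
      have htv : t ≤ u + ε/2 := le_trans ht.2 (min_le_right _ _)
      have h1 : clamp t = t := by
        rw [hclamp]; simp only; rw [min_eq_left htv, max_eq_right hxle.le]
      have htball : t ∈ Metric.ball u ε := by
        rw [Metric.mem_ball, Real.dist_eq, abs_lt]; constructor <;> linarith
      rw [AddCircle.coe_add, hδ0, add_zero, hlam'def]
      simp only
      rw [h1, hlam t htball]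
  have hvS : v ∈ S := by
    refine ⟨⟨?_, min_le_left _ _⟩, h₂, hh₂c, hh₂a, hlift⟩
    rw [hv]; exact le_min hab.le (by linarith)
  have hvu : v ≤ u := le_csSup hbdd hvS
  have hueq : u = b := by
    by_contra hneq
    have hlt : u < b := lt_of_le_of_ne hub hneq
    have : u < v := lt_min hlt (by linarith)
    linarith
  refine ⟨h₂, hh₂c, hh₂a, ?_⟩
  intro t ht
  apply hlift
  have : v = b := by rw [hv, hueq]; exact min_eq_left (by linarith)
  rw [this]; exact ht

lemma lift_Icc_symm (hc : Continuous c) (R s₀ : ℝ) (hs₀ : ((s₀ : ℝ) : Circ) = c 0) :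
    ∃ g : ℝ → ℝ, Continuous g ∧ g 0 = s₀ ∧ ∀ t ∈ Icc (-R) R, ((g t : ℝ) : Circ) = c t := by
  obtain ⟨hp, hpc, hp0, hpl⟩ := lift_Icc hc 0 R s₀ hs₀
  have hcn : Continuous (fun t => c (-t)) := hc.comp continuous_neg
  obtain ⟨hm, hmc, hm0, hml⟩ := lift_Icc hcn 0 R s₀ (by rw [hs₀, neg_zero])
  set g := fun t => if t ≤ 0 then hm (-t) else hp t with hg
  have hjunc : ∀ t : ℝ, t = (0:ℝ) → hm (-t) = hp t := by
    intro t ht; subst ht; rw [neg_zero, hm0, hp0]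
  refine ⟨g, ?_, ?_, ?_⟩
  · exact Continuous.if_le (hmc.comp continuous_neg) hpc continuous_id continuous_const hjunc
  · rw [hg]; simp only; rw [if_pos (le_refl (0:ℝ)), neg_zero, hm0]
  · intro t ht
    rw [hg]; simp only
    by_cases h0 : t ≤ 0
    · rw [if_pos h0]
      have : ((hm (-t) : ℝ) : Circ) = c (-(-t)) := hml (-t) ⟨by linarith [ht.1], by linarith [ht.1]⟩
      rwa [neg_neg] at this
    · push_neg at h0
      rw [if_neg (not_le.mpr h0)]
      exact hpl t ⟨h0.le, ht.2⟩

lemma exists_global_lift (hc : Continuous c) (s₀ : ℝ) (hs₀ : ((s₀ : ℝ) : Circ) = c 0) :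
    ∃ h : ℝ → ℝ, Continuous h ∧ h 0 = s₀ ∧ ∀ t, ((h t : ℝ) : Circ) = c t := by
  have hex : ∀ n : ℕ, ∃ g : ℝ → ℝ, Continuous g ∧ g 0 = s₀ ∧
      ∀ t ∈ Icc (-(n+1:ℝ)) (n+1:ℝ), ((g t : ℝ) : Circ) = c t :=
    fun n => lift_Icc_symm hc (n+1) s₀ hs₀
  choose g hgc hg0 hgl using hex
  have hconsist : ∀ m n : ℕ, ∀ t : ℝ, |t| ≤ (m+1:ℝ) → |t| ≤ (n+1:ℝ) → g m t = g n t := by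
    intro m n t hm hn
    set K := min (m:ℝ) (n:ℝ) with hK
    have hKm : K ≤ (m:ℝ) := min_le_left _ _
    have hKn : K ≤ (n:ℝ) := min_le_right _ _
    have happ : Set.EqOn (g m) (g n) (Icc (-(K+1)) (K+1)) := by
      apply lift_eqOn isPreconnected_Icc (hgc m) (hgc n)
      · intro t' ht'
        rw [hgl m t' ⟨by linarith [ht'.1], by linarith [ht'.2]⟩,
            hgl n t' ⟨by linarith [ht'.1], by linarith [ht'.2]⟩]
      · show (0:ℝ) ∈ Icc (-(K+1)) (K+1)
        constructor
        · have : (0:ℝ) ≤ K := le_min (Nat.cast_nonneg m) (Nat.cast_nonneg n)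
          linarith
        · have : (0:ℝ) ≤ K := le_min (Nat.cast_nonneg m) (Nat.cast_nonneg n)
          linarith
      · rw [hg0 m, hg0 n]
    rcases abs_le.mp hm with ⟨hm1, hm2⟩
    rcases abs_le.mp hn with ⟨hn1, hn2⟩
    apply happ
    constructor
    · rcases le_total (m:ℝ) (n:ℝ) with h | h
      · rw [hK, min_eq_left h]; linarith
      · rw [hK, min_eq_right h]; linarith
    · rcases le_total (m:ℝ) (n:ℝ) with h | h
      · rw [hK, min_eq_left h]; linarith
      · rw [hK, min_eq_right h]; linarith
  set h := fun t : ℝ => g ⌈|t|⌉₊ t with hh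
  have habs : ∀ t : ℝ, |t| ≤ (⌈|t|⌉₊ + 1 : ℝ) := by
    intro t
    have := Nat.le_ceil |t|
    linarith
  have hliftall : ∀ t, ((h t : ℝ) : Circ) = c t := by
    intro t
    apply hgl
    rcases abs_le.mp (habs t) with ⟨h1, h2⟩
    exact ⟨h1, h2⟩
  have hcont : Continuous h := by
    rw [continuous_iff_continuousAt]
    intro t₀
    set M := ⌈|t₀|⌉₊ + 1 with hM
    have hev : ∀ t ∈ Metric.ball t₀ 1, h t = g M t := by
      intro t ht
      rw [Metric.mem_ball, Real.dist_eq] at ht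
      apply hconsist
      · exact habs t
      · have h1 : |t| ≤ |t₀| + 1 := by
          have := abs_sub_abs_le_abs_sub t t₀
          linarith
        have h2 : |t₀| ≤ (⌈|t₀|⌉₊ : ℝ) := Nat.le_ceil _
        rw [hM]
        push_cast
        linarith
    apply ContinuousAt.congr ((hgc M).continuousAt)
    apply Filter.eventuallyEq_of_mem (Metric.ball_mem_nhds t₀ one_pos)
    intro t ht
    exact (hev t ht).symm
  refine ⟨h, hcont, ?_, hliftall⟩
  rw [hh]; simp only; exact hg0 _

end LiftMachinery

section Totality

lemma tendsto_cross {f : ℕ → ℝ × ℝ} {l : ℝ × ℝ} (h : Tendsto f atTop (𝓝 l)) (b : ℝ × ℝ) :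
    Tendsto (fun n => cross (f n) b) atTop (𝓝 (cross l b)) := by
  have h1 : Tendsto (fun n => (f n).1) atTop (𝓝 l.1) := (continuous_fst.tendsto l).comp h
  have h2 : Tendsto (fun n => (f n).2) atTop (𝓝 l.2) := (continuous_snd.tendsto l).comp h
  exact (h1.mul_const b.2).sub (h2.mul_const b.1)

lemma cross_smul_left (c : ℝ) (x b : ℝ × ℝ) : cross (c • x) b = c * cross x b := by
  show (c • x).1 * b.2 - (c • x).2 * b.1 = c * (x.1 * b.2 - x.2 * b.1)
  simp only [Prod.smul_fst, Prod.smul_snd, smul_eq_mul]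
  ring

lemma cross_self (b : ℝ × ℝ) : cross b b = 0 := by
  show b.1 * b.2 - b.2 * b.1 = 0; ring

lemma exists_tangent_match {F G : Circ → ℝ × ℝ} (hF : Generic F) (hG : Generic G)
    (hrange : Set.range F = Set.range G) (t₀ : ℝ) :
    ∃ s : ℝ, liftOf G s = liftOf F t₀ ∧ tangentAt F t₀ = tangentAt G s := by
  obtain ⟨hFc1, hFd, _, _, _⟩ := hF
  obtain ⟨hGc1, hGd, _, _, _⟩ := hG
  have hFdiff : ∀ t, HasDerivAt (liftOf F) (deriv (liftOf F) t) t :=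
    fun t => ((hFc1.differentiable one_ne_zero) t).hasDerivAt
  have hGdiff : ∀ t, HasDerivAt (liftOf G) (deriv (liftOf G) t) t :=
    fun t => ((hGc1.differentiable one_ne_zero) t).hasDerivAt
  set p := liftOf F t₀ with hp
  set a := deriv (liftOf F) t₀ with ha
  have ha0 : a ≠ 0 := hFd t₀
  set τ : ℕ → ℝ := fun n => t₀ + 1 / (n + 1 : ℝ) with hτdef
  have hτpos : ∀ n : ℕ, 0 < 1 / (n + 1 : ℝ) := fun n => by positivity
  have hτne : ∀ n, τ n ≠ t₀ := fun n => by
    have := hτpos n; simp only [hτdef]; intro hcon; nlinarith [hcon]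
  have hτtend : Tendsto τ atTop (𝓝 t₀) := by
    have h0 : Tendsto (fun n : ℕ => 1 / (n + 1 : ℝ)) atTop (𝓝 0) :=
      tendsto_one_div_add_atTop_nhds_zero_nat
    have h1 := h0.const_add t₀
    rw [hτdef]
    simpa using h1
  have hτtend' : Tendsto τ atTop (𝓝[≠] t₀) := by
    rw [tendsto_nhdsWithin_iff]
    exact ⟨hτtend, Filter.Eventually.of_forall (fun n => hτne n)⟩
  -- choose preimages under G
  have hmemrange : ∀ n, F ((τ n : ℝ) : Circ) ∈ Set.range G := by
    intro n; rw [← hrange]; exact Set.mem_range_self _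
  choose y hy using hmemrange
  set s : ℕ → ℝ := fun n => θc (y n) with hsdef
  have hsK : ∀ n, s n ∈ Icc (-π) (-π + 2 * π) := fun n => Ioc_subset_Icc_self (θc_mem (y n))
  have hsG : ∀ n, liftOf G (s n) = liftOf F (τ n) := by
    intro n
    show G ((θc (y n) : ℝ) : Circ) = F ((τ n : ℝ) : Circ)
    rw [coe_θc]
    exact hy n
  obtain ⟨sS, _, φ, hφmono, hφtend⟩ := (isCompact_Icc).tendsto_subseq hsK
  have hφtop : Tendsto φ atTop atTop := hφmono.tendsto_atTop
  -- G sS = p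
  have hGlim : liftOf G sS = p := by
    have h1 : Tendsto (fun n => liftOf G (s (φ n))) atTop (𝓝 (liftOf G sS)) :=
      ((hGc1.continuous).tendsto sS).comp hφtend
    have h2 : Tendsto (fun n => liftOf G (s (φ n))) atTop (𝓝 p) := by
      have : Tendsto (fun n => liftOf F (τ (φ n))) atTop (𝓝 p) :=
        ((hFc1.continuous).tendsto t₀).comp (hτtend.comp hφtop)
      exact Tendsto.congr (fun n => (hsG (φ n)).symm) this
    exact tendsto_nhds_unique h1 h2
  set b := deriv (liftOf G) sS with hb
  have hb0 : b ≠ 0 := hGd sS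
  refine ⟨sS, hGlim, ?_⟩
  -- show cross a b = 0
  set q : ℕ → ℝ × ℝ := fun n => slope (liftOf F) t₀ (τ (φ n)) with hqdef
  set r : ℕ → ℝ × ℝ := fun n => slope (liftOf G) sS (s (φ n)) with hrdef
  have hq : Tendsto q atTop (𝓝 a) := by
    have := hasDerivAt_iff_tendsto_slope.mp (hFdiff t₀)
    exact this.comp (hτtend'.comp hφtop)
  have hqne : ∀ᶠ n in atTop, q n ≠ 0 := hq.eventually_ne ha0
  have hdne : ∀ᶠ n in atTop, liftOf F (τ (φ n)) - p ≠ 0 := by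
    filter_upwards [hqne] with n hn
    intro hcon
    apply hn
    show slope (liftOf F) t₀ (τ (φ n)) = 0
    rw [slope_def_module]
    rw [show liftOf F (τ (φ n)) - liftOf F t₀ = 0 from hcon]
    simp
  have hsne : ∀ᶠ n in atTop, s (φ n) ≠ sS := by
    filter_upwards [hdne] with n hn
    intro hcon
    apply hn
    rw [← hsG (φ n), hcon, hGlim, sub_self]
  have hstend' : Tendsto (fun n => s (φ n)) atTop (𝓝[≠] sS) := by
    rw [tendsto_nhdsWithin_iff]
    exact ⟨hφtend, hsne⟩
  have hr : Tendsto r atTop (𝓝 b) := by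
    have := hasDerivAt_iff_tendsto_slope.mp (hGdiff sS)
    exact this.comp hstend'
  have hrne : ∀ᶠ n in atTop, r n ≠ 0 := hr.eventually_ne hb0
  -- key identity
  have hkey : ∀ᶠ n in atTop, |cross (q n) b| = (‖q n‖ / ‖r n‖) * |cross (r n) b| := by
    filter_upwards [hsne, hrne] with n hsn hrn
    set ε := τ (φ n) - t₀ with hε
    set δ := s (φ n) - sS with hδ
    have hε0 : ε ≠ 0 := sub_ne_zero.mpr (hτne (φ n))
    have hδ0 : δ ≠ 0 := sub_ne_zero.mpr hsn
    have hd : liftOf F (τ (φ n)) - p = liftOf G (s (φ n)) - liftOf G sS := by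
      rw [hsG (φ n), hGlim]
    have hqd : q n = ε⁻¹ • (liftOf G (s (φ n)) - liftOf G sS) := by
      rw [hqdef]; simp only; rw [slope_def_module, ← hd]
    have hrd : r n = δ⁻¹ • (liftOf G (s (φ n)) - liftOf G sS) := by
      rw [hrdef]; simp only; rw [slope_def_module]
    have hqr : q n = (ε⁻¹ * δ) • r n := by
      rw [hqd, hrd, smul_smul]
      congr 1
      field_simp
    have hnorm : ‖q n‖ = |ε⁻¹ * δ| * ‖r n‖ := by
      rw [hqr, norm_smul, Real.norm_eq_abs]
    have hrnorm : ‖r n‖ ≠ 0 := norm_ne_zero_iff.mpr hrn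
    have habs : |ε⁻¹ * δ| = ‖q n‖ / ‖r n‖ := by
      rw [hnorm, mul_div_assoc, div_self hrnorm, mul_one]
    calc |cross (q n) b| = |ε⁻¹ * δ| * |cross (r n) b| := by
          rw [show cross (q n) b = cross ((ε⁻¹ * δ) • r n) b from by rw [← hqr],
              cross_smul_left, abs_mul]
      _ = (‖q n‖ / ‖r n‖) * |cross (r n) b| := by rw [habs]
  have hlhs : Tendsto (fun n => |cross (q n) b|) atTop (𝓝 (|cross a b|)) :=
    (tendsto_cross hq b).abs
  have hrhs : Tendsto (fun n => (‖q n‖ / ‖r n‖) * |cross (r n) b|) atTop (𝓝 0) := by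
    have h1 : Tendsto (fun n => ‖q n‖ / ‖r n‖) atTop (𝓝 (‖a‖ / ‖b‖)) :=
      (hq.norm).div (hr.norm) (norm_ne_zero_iff.mpr hb0)
    have h2 : Tendsto (fun n => |cross (r n) b|) atTop (𝓝 (|cross b b|)) :=
      (tendsto_cross hr b).abs
    have := h1.mul h2
    rw [cross_self] at this
    simpa using this
  have hcross : |cross a b| = 0 :=
    tendsto_nhds_unique hlhs (hrhs.congr' (by filter_upwards [hkey] with n hn; exact hn.symm))
  show Submodule.span ℝ {a} = Submodule.span ℝ {b}
  exact (span_eq_iff_cross ha0 hb0).mpr (abs_eq_zero.mp hcross)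

end Totality

section LocalC1

lemma sum_sq_pos_of_ne_zero {v : ℝ × ℝ} (hv : v ≠ 0) : 0 < v.1 * v.1 + v.2 * v.2 := by
  have h1 : v.1 ≠ 0 ∨ v.2 ≠ 0 := by
    by_contra hcon; push_neg at hcon
    exact hv (Prod.ext hcon.1 hcon.2)
  rcases h1 with h1 | h1
  · nlinarith [sq_nonneg v.2, sq_abs v.1, abs_pos.mpr h1]
  · nlinarith [sq_nonneg v.1, sq_abs v.2, abs_pos.mpr h1]

lemma local_c1 {F G : Circ → ℝ × ℝ} (hF : Generic F) (hG : Generic G)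
    {h : ℝ → ℝ} (hcont : Continuous h)
    (hGh : ∀ t, liftOf G (h t) = liftOf F t)
    (hTan : ∀ t, tangentAt F t = tangentAt G (h t)) (t₀ : ℝ) :
    ContDiffAt ℝ 1 h t₀ ∧ deriv h t₀ ≠ 0 := by
  obtain ⟨hFc1, hFd, -, -, -⟩ := hF
  obtain ⟨hGc1, hGd, -, -, -⟩ := hG
  have hGdiff : ∀ t, HasDerivAt (liftOf G) (deriv (liftOf G) t) t :=
    fun t => ((hGc1.differentiable one_ne_zero) t).hasDerivAt
  have hFdiff : ∀ t, HasDerivAt (liftOf F) (deriv (liftOf F) t) t :=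
    fun t => ((hFc1.differentiable one_ne_zero) t).hasDerivAt
  set s₀ := h t₀ with hs₀
  set v := deriv (liftOf G) s₀ with hv
  have hv0 : v ≠ 0 := hGd s₀
  set lmap : (ℝ × ℝ) →L[ℝ] ℝ :=
    v.1 • (ContinuousLinearMap.fst ℝ ℝ ℝ) + v.2 • (ContinuousLinearMap.snd ℝ ℝ ℝ) with hlmap
  have hlmap_apply : ∀ w : ℝ × ℝ, lmap w = v.1 * w.1 + v.2 * w.2 := by
    intro w
    rw [hlmap]
    simp [ContinuousLinearMap.smul_apply, smul_eq_mul]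
  set ℓ : ℝ → ℝ := fun s => lmap (liftOf G s) with hℓ
  set m : ℝ → ℝ := fun t => lmap (liftOf F t) with hm
  have hℓdiff : ∀ s, HasDerivAt ℓ (lmap (deriv (liftOf G) s)) s :=
    fun s => (lmap.hasFDerivAt.comp_hasDerivAt s (hGdiff s))
  have hmdiff : ∀ t, HasDerivAt m (lmap (deriv (liftOf F) t)) t :=
    fun t => (lmap.hasFDerivAt.comp_hasDerivAt t (hFdiff t))
  have hℓcd : ContDiff ℝ 1 ℓ := lmap.contDiff.comp hGc1
  have hmcd : ContDiff ℝ 1 m := lmap.contDiff.comp hFc1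
  set c0 : ℝ := lmap v with hc0def
  have hc0 : c0 ≠ 0 := by
    rw [hc0def, hlmap_apply]
    exact (sum_sq_pos_of_ne_zero hv0).ne'
  set e : ℝ ≃L[ℝ] ℝ := ContinuousLinearEquiv.unitsEquivAut ℝ (Units.mk0 c0 hc0) with he
  have hfe : HasFDerivAt ℓ (e : ℝ →L[ℝ] ℝ) s₀ := by
    have h1 : HasDerivAt ℓ c0 s₀ := hℓdiff s₀
    have h2 : (e : ℝ →L[ℝ] ℝ) = ContinuousLinearMap.smulRight (1 : ℝ →L[ℝ] ℝ) c0 := by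
      apply ContinuousLinearMap.ext_ring
      simp [he, ContinuousLinearEquiv.unitsEquivAut]
    rw [h2]
    exact h1.hasFDerivAt
  have hℓm : ∀ t, ℓ (h t) = m t := by
    intro t
    rw [hℓ, hm]
    simp only
    rw [hGh t]
  set Φ := (hℓcd.contDiffAt).localInverse hfe one_ne_zero with hΦ
  have hΦcd : ContDiffAt ℝ 1 Φ (ℓ s₀) := (hℓcd.contDiffAt).to_localInverse hfe one_ne_zero
  have hlinv : ∀ᶠ x in 𝓝 s₀, Φ (ℓ x) = x :=
    ((hℓcd.contDiffAt).hasStrictFDerivAt' hfe one_ne_zero).eventually_left_inverse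
  have hev : h =ᶠ[𝓝 t₀] Φ ∘ m := by
    have h1 : ∀ᶠ t in 𝓝 t₀, Φ (ℓ (h t)) = h t := hcont.continuousAt hlinv
    filter_upwards [h1] with t ht
    show h t = Φ (m t)
    rw [← hℓm t, ht]
  have hCD : ContDiffAt ℝ 1 h t₀ := by
    have hcomp : ContDiffAt ℝ 1 (Φ ∘ m) t₀ := by
      apply ContDiffAt.comp
      · rw [show m t₀ = ℓ s₀ from (hℓm t₀).symm]
        exact hΦcd
      · exact hmcd.contDiffAt
    exact hcomp.congr_of_eventuallyEq hev
  refine ⟨hCD, ?_⟩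
  -- derivative nonzero
  have hder_h : HasDerivAt h (deriv h t₀) t₀ := (hCD.differentiableAt one_ne_zero).hasDerivAt
  have hchain : HasDerivAt (fun t => ℓ (h t)) (c0 * deriv h t₀) t₀ := by
    have := (hℓdiff s₀).comp t₀ hder_h
    exact this
  have hchain' : HasDerivAt m (c0 * deriv h t₀) t₀ := by
    have hfun : (fun t => ℓ (h t)) = m := funext hℓm
    rwa [hfun] at hchain
  have huniq : c0 * deriv h t₀ = lmap (deriv (liftOf F) t₀) :=
    (hchain'.unique (hmdiff t₀))
  -- tangent match gives deriv F = k • v with k ≠ 0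
  have hmem : deriv (liftOf F) t₀ ∈ Submodule.span ℝ ({v} : Set (ℝ × ℝ)) := by
    have := hTan t₀
    unfold tangentAt at this
    rw [← hs₀] at this
    rw [← hv] at this
    rw [← this]
    exact Submodule.mem_span_singleton_self _
  obtain ⟨k, hk⟩ := Submodule.mem_span_singleton.mp hmem
  have hk0 : k ≠ 0 := by
    intro hcon
    rw [hcon, zero_smul] at hk
    exact hFd t₀ hk.symm
  have hlk : lmap (deriv (liftOf F) t₀) = k * c0 := by
    rw [← hk, map_smul, smul_eq_mul, hc0def]
  intro hcon
  rw [hcon, mul_zero, hlk] at huniq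
  rcases mul_eq_zero.mp huniq.symm with h | h
  · exact hk0 h
  · exact hc0 h

lemma coe_ne_of_Ioo {u t : ℝ} (h : u - t ∈ Ioo 0 (2 * π)) : ((u : ℝ) : Circ) ≠ ((t : ℝ) : Circ) := by
  intro hcon
  obtain ⟨n, hn⟩ := coe_eq_coe_iff.mp hcon
  rw [zsmul_eq_mul] at hn
  have hπ := Real.pi_pos
  obtain ⟨h1, h2⟩ := h
  rcases lt_trichotomy n 0 with hc | hc | hc
  · have : (n:ℝ) ≤ -1 := by exact_mod_cast (by omega : n ≤ -1)
    nlinarith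
  · rw [hc] at hn; push_cast at hn; nlinarith
  · have : (1:ℝ) ≤ (n:ℝ) := by exact_mod_cast hc
    nlinarith

lemma no_universal_double {F : Circ → ℝ × ℝ} (hF : Generic F)
    (hdbl : ∀ t : ℝ, ∃ u : ℝ, ((u : ℝ) : Circ) ≠ ((t : ℝ) : Circ) ∧
      F ((u : ℝ) : Circ) = F ((t : ℝ) : Circ)) : False := by
  obtain ⟨hFc1, hFd, hfin, -, -⟩ := hF
  have hsub : Set.range (liftOf F) ⊆ {p : ℝ × ℝ | ∃ x y : Circ, x ≠ y ∧ F x = p ∧ F y = p} := by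
    rintro p ⟨t, rfl⟩
    obtain ⟨u, hu1, hu2⟩ := hdbl t
    exact ⟨((u:ℝ):Circ), ((t:ℝ):Circ), hu1, hu2, rfl⟩
  have hfinrange : (Set.range (liftOf F)).Finite := hfin.subset hsub
  -- liftOf F is not constant
  have hnc : ∃ t₁ : ℝ, liftOf F t₁ ≠ liftOf F 0 := by
    by_contra hcon
    push_neg at hcon
    have : liftOf F = fun _ => liftOf F 0 := funext hcon
    have hd : deriv (liftOf F) 0 = 0 := by rw [this]; exact deriv_const _ _
    exact hFd 0 hd
  obtain ⟨t₁, ht₁⟩ := hnc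
  set w := liftOf F t₁ - liftOf F 0 with hw
  have hw0 : w ≠ 0 := sub_ne_zero.mpr ht₁
  set ψ : ℝ × ℝ → ℝ := fun z => w.1 * z.1 + w.2 * z.2 with hψ
  have hψcont : Continuous ψ := by
    apply Continuous.add
    · exact (continuous_const.mul continuous_fst)
    · exact (continuous_const.mul continuous_snd)
  have hψne : ψ (liftOf F 0) ≠ ψ (liftOf F t₁) := by
    have : ψ (liftOf F t₁) - ψ (liftOf F 0) = w.1 * w.1 + w.2 * w.2 := by
      rw [hψ]; simp only
      have h1 : w.1 = (liftOf F t₁).1 - (liftOf F 0).1 := rfl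
      have h2 : w.2 = (liftOf F t₁).2 - (liftOf F 0).2 := rfl
      rw [h1, h2]; ring
    have hpos := sum_sq_pos_of_ne_zero hw0
    intro hcon
    rw [hcon] at this
    nlinarith
  -- IVT gives infinitely many values
  have hIVT := intermediate_value_uIcc
    ((hψcont.comp (hFc1.continuous)).continuousOn :
      ContinuousOn (fun t => ψ (liftOf F t)) (uIcc 0 t₁))
  have hinf : (uIcc (ψ (liftOf F 0)) (ψ (liftOf F t₁))).Infinite := by
    rw [uIcc]
    apply Set.Icc_infinite
    rcases lt_or_gt_of_ne hψne with hlt | hlt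
    · rw [min_eq_left hlt.le, max_eq_right hlt.le]; exact hlt
    · rw [min_eq_right hlt.le, max_eq_left hlt.le]; exact hlt
  have hfinimg : ((fun t => ψ (liftOf F t)) '' (uIcc 0 t₁)).Finite := by
    apply Set.Finite.subset (hfinrange.image ψ)
    rintro y ⟨t, -, rfl⟩
    exact ⟨liftOf F t, Set.mem_range_self _, rfl⟩
  exact hinf (Set.Finite.subset hfinimg hIVT)

end LocalC1

lemma existsUnique_target {F G : Circ → ℝ × ℝ} (hF : Generic F) (hG : Generic G)
    (hrange : Set.range F = Set.range G) (x : Circ) :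
    ∃! y : Circ, G y = F x ∧ ∀ t s : ℝ, ((t : ℝ) : Circ) = x → ((s : ℝ) : Circ) = y →
      tangentAt F t = tangentAt G s := by
  obtain ⟨sx, hsx1, hsx2⟩ := exists_tangent_match hF hG hrange (θc x)
  have hclean := hG.2.2.2.2
  have hGsx : G ((sx : ℝ) : Circ) = F x := by
    have h1 : G ((sx : ℝ) : Circ) = F ((θc x : ℝ) : Circ) := hsx1
    rwa [coe_θc] at h1
  refine ⟨((sx : ℝ) : Circ), ⟨hGsx, ?_⟩, ?_⟩
  · intro t s ht hs
    have h1 : tangentAt F t = tangentAt F (θc x) :=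
      tangentAt_coe_eq (ht.trans (coe_θc x).symm)
    have h2 : tangentAt G s = tangentAt G sx := tangentAt_coe_eq hs
    rw [h1, h2]
    exact hsx2
  · rintro y ⟨hy1, hy2⟩
    have hyl : liftOf G (θc y) = liftOf G sx := by
      show G ((θc y : ℝ) : Circ) = G ((sx : ℝ) : Circ)
      rw [coe_θc, hGsx]
      exact hy1
    have htan : tangentAt G (θc y) = tangentAt G sx := by
      have ha := hy2 (θc x) (θc y) (coe_θc x) (coe_θc y)
      exact ha.symm.trans hsx2
    have := hclean (θc y) sx hyl htan
    rw [coe_θc] at this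
    exact this

end CDaux

set_option maxHeartbeats 1000000

/-- If `f, g` are generic with `f(S¹) = g(S¹)`, then the map `h` sending `θ` to the
unique `θ'` with `g(θ') = f(θ)` and matching tangent lines is a well-defined
C¹-diffeomorphism with `g ∘ h = f` (and it is the unique such map). -/
theorem construct_diffeo (F G : Circ → ℝ × ℝ)
    (hF : Generic F) (hG : Generic G) (hrange : Set.range F = Set.range G) :
    ∃ H : Circ → Circ, CircleDiffeo H ∧ G ∘ H = F ∧
      (∀ x : Circ, ∀ t s : ℝ, ((t : ℝ) : Circ) = x → ((s : ℝ) : Circ) = H x →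
        tangentAt F t = tangentAt G s) ∧
      (∀ H' : Circ → Circ,
        ((∀ x, G (H' x) = F x) ∧
         (∀ x : Circ, ∀ t s : ℝ, ((t : ℝ) : Circ) = x → ((s : ℝ) : Circ) = H' x →
            tangentAt F t = tangentAt G s)) → H' = H) := by
  have hexu := fun x => CDaux.existsUnique_target hF hG hrange x
  choose H hH hU using hexu
  have hFcont : Continuous F := CDaux.continuous_of_liftOf (hF.1.continuous)
  have hGcont : Continuous G := CDaux.continuous_of_liftOf (hG.1.continuous)
  have hFdC := CDaux.continuous_derivC hF.1
  have hGdC := CDaux.continuous_derivC hG.1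
  set Gr : Set (Circ × Circ) :=
    {q | F q.1 = G q.2 ∧ cross (CDaux.derivC F q.1) (CDaux.derivC G q.2) = 0} with hGrdef
  have hcrosscont : Continuous fun q : Circ × Circ =>
      cross (CDaux.derivC F q.1) (CDaux.derivC G q.2) := by
    have h1 : Continuous fun q : Circ × Circ => CDaux.derivC F q.1 := hFdC.comp continuous_fst
    have h2 : Continuous fun q : Circ × Circ => CDaux.derivC G q.2 := hGdC.comp continuous_snd
    show Continuous fun q : Circ × Circ =>
      (CDaux.derivC F q.1).1 * (CDaux.derivC G q.2).2 -
        (CDaux.derivC F q.1).2 * (CDaux.derivC G q.2).1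
    exact ((continuous_fst.comp h1).mul (continuous_snd.comp h2)).sub
      ((continuous_snd.comp h1).mul (continuous_fst.comp h2))
  have hGrclosed : IsClosed Gr := by
    apply IsClosed.inter
    · exact isClosed_eq (hFcont.comp continuous_fst) (hGcont.comp continuous_snd)
    · exact isClosed_eq hcrosscont continuous_const
  have hmemGr : ∀ x, (x, H x) ∈ Gr := by
    intro x
    refine ⟨(hH x).1.symm, ?_⟩
    have ht := (hH x).2 (CDaux.θc x) (CDaux.θc (H x)) (CDaux.coe_θc x) (CDaux.coe_θc (H x))
    exact (CDaux.span_eq_iff_cross (hF.2.1 _) (hG.2.1 _)).mp ht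
  have hGrfun : ∀ x y, (x, y) ∈ Gr → y = H x := by
    rintro x y ⟨h1, h2⟩
    refine hU x y ⟨h1.symm, ?_⟩
    intro t s ht hs
    have e1 : tangentAt F t = tangentAt F (CDaux.θc x) :=
      CDaux.tangentAt_coe_eq (ht.trans (CDaux.coe_θc x).symm)
    have e2 : tangentAt G s = tangentAt G (CDaux.θc y) :=
      CDaux.tangentAt_coe_eq (hs.trans (CDaux.coe_θc y).symm)
    have e3 : tangentAt F (CDaux.θc x) = tangentAt G (CDaux.θc y) :=
      (CDaux.span_eq_iff_cross (hF.2.1 _) (hG.2.1 _)).mpr h2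
    rw [e1, e2]
    exact e3
  have hHcont : Continuous H := by
    rw [continuous_iff_isClosed]
    intro C hC
    have heq : H ⁻¹' C = Prod.fst '' (Gr ∩ (Set.univ ×ˢ C)) := by
      ext x
      constructor
      · intro hx
        exact ⟨(x, H x), ⟨hmemGr x, ⟨trivial, hx⟩⟩, rfl⟩
      · rintro ⟨⟨x', y⟩, ⟨hGr', ⟨-, hyC⟩⟩, rfl⟩
        have := hGrfun x' y hGr'
        show H x' ∈ C
        rwa [← this]
    rw [heq]
    exact isClosedMap_fst_of_compactSpace _ (hGrclosed.inter (isClosed_univ.prod hC))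
  have hccont : Continuous fun t : ℝ => H ((t : ℝ) : Circ) :=
    hHcont.comp (QuotientAddGroup.isQuotientMap_mk _).continuous
  obtain ⟨h, hhcont, hh0, hhlift⟩ := CDaux.exists_global_lift hccont
    (CDaux.θc (H ((0 : ℝ) : Circ))) (CDaux.coe_θc _)
  have hGh : ∀ t, liftOf G (h t) = liftOf F t := by
    intro t
    show G ((h t : ℝ) : Circ) = F ((t : ℝ) : Circ)
    rw [hhlift t]
    exact (hH ((t : ℝ) : Circ)).1
  have hTan : ∀ t, tangentAt F t = tangentAt G (h t) :=
    fun t => (hH ((t : ℝ) : Circ)).2 t (h t) rfl (hhlift t)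
  have hlc := fun t₀ => CDaux.local_c1 hF hG hhcont hGh hTan t₀
  have hhC1 : ContDiff ℝ 1 h := contDiff_iff_contDiffAt.mpr (fun t => (hlc t).1)
  have hhd : ∀ t, deriv h t ≠ 0 := fun t => (hlc t).2
  -- degree argument
  have h2π := Real.two_pi_pos
  have hper : ∀ t : ℝ, ((h (t + 2 * π) - h t : ℝ) : Circ) = 0 := by
    intro t
    have e1 : ((h (t + 2 * π) : ℝ) : Circ) = ((h t : ℝ) : Circ) := by
      rw [hhlift, hhlift, AddCircle.coe_add_period]
    rw [AddCircle.coe_sub, e1, sub_self]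
  set g := fun t : ℝ => h (t + 2 * π) - h t with hgdef
  have hgcont : Continuous g := (hhcont.comp (continuous_id.add continuous_const)).sub hhcont
  have hgconst : ∀ t, g t = g 0 := by
    intro t
    have himg : IsPreconnected (g '' Set.univ) :=
      isPreconnected_univ.image _ hgcont.continuousOn
    have hss := CDaux.subsingleton_of_coe_zero himg
      (by rintro y ⟨t', -, rfl⟩; exact hper t')
    exact hss ⟨t, trivial, rfl⟩ ⟨0, trivial, rfl⟩
  obtain ⟨n, hn⟩ := (AddCircle.coe_eq_zero_iff _).mp (hper 0)
  rw [zsmul_eq_mul] at hn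
  -- hn : (n : ℝ) * (2 * π) = h (0 + 2π) - h 0 = g 0
  have hgn : ∀ t, h (t + 2 * π) = h t + (n : ℝ) * (2 * π) := by
    intro t
    have := hgconst t
    rw [hgdef] at this
    simp only at this
    linarith [hn, this]
  have hderivcont : Continuous (deriv h) := hhC1.continuous_deriv le_rfl
  have hsign : (∀ t, 0 < deriv h t) ∨ (∀ t, deriv h t < 0) := by
    rcases lt_or_gt_of_ne (hhd 0) with hneg | hpos
    · right
      intro t
      by_contra hge
      push_neg at hge
      have h0lt : 0 < deriv h t := lt_of_le_of_ne hge (Ne.symm (hhd t))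
      have hmem : (0 : ℝ) ∈ uIcc (deriv h 0) (deriv h t) := by
        rw [mem_uIcc]; left; exact ⟨hneg.le, h0lt.le⟩
      obtain ⟨x, -, hx⟩ := intermediate_value_uIcc hderivcont.continuousOn hmem
      exact hhd x hx
    · left
      intro t
      by_contra hge
      push_neg at hge
      have h0lt : deriv h t < 0 := lt_of_le_of_ne hge (hhd t)
      have hmem : (0 : ℝ) ∈ uIcc (deriv h 0) (deriv h t) := by
        rw [mem_uIcc]; right; exact ⟨h0lt.le, hpos.le⟩
      obtain ⟨x, -, hx⟩ := intermediate_value_uIcc hderivcont.continuousOn hmem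
      exact hhd x hx
  -- main contradiction machine for |n| ≥ 2 :
  have hdouble : ∀ t u : ℝ, u ∈ Ioo t (t + 2 * π) → ((h u : ℝ) : Circ) = ((h t : ℝ) : Circ) →
      ((u : ℝ) : Circ) ≠ ((t : ℝ) : Circ) ∧ F ((u : ℝ) : Circ) = F ((t : ℝ) : Circ) := by
    intro t u hu hcoe
    constructor
    · exact CDaux.coe_ne_of_Ioo ⟨by linarith [hu.1], by linarith [hu.2]⟩
    · have e2 : H ((u : ℝ) : Circ) = H ((t : ℝ) : Circ) := by
        rw [← hhlift u, ← hhlift t]; exact hcoe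
      rw [← (hH ((u : ℝ) : Circ)).1, ← (hH ((t : ℝ) : Circ)).1, e2]
  have hdeg : (∀ t, h (t + 2 * π) = h t + 2 * π) ∨ (∀ t, h (t + 2 * π) = h t - 2 * π) := by
    rcases hsign with hpos | hneg
    · -- increasing: n ≥ 1
      have hmono : StrictMono h := strictMono_of_deriv_pos hpos
      have hδpos : (0 : ℝ) < (n : ℝ) * (2 * π) := by
        have := hmono (show (0 : ℝ) < 0 + 2 * π by linarith)
        rw [hgn 0] at this
        linarith
      have hn1 : 1 ≤ n := by
        by_contra hcon
        push_neg at hcon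
        have : (n : ℝ) ≤ 0 := by exact_mod_cast (by omega : n ≤ 0)
        nlinarith
      rcases eq_or_lt_of_le hn1 with hone | htwo
      · left
        intro t
        rw [hgn t, ← hone]
        push_cast
        ring
      · exfalso
        apply CDaux.no_universal_double hF
        intro t
        have hn2 : (2 : ℝ) ≤ (n : ℝ) := by exact_mod_cast (by omega : (2:ℤ) ≤ n)
        have hmemIoo : h t + 2 * π ∈ Ioo (h t) (h (t + 2 * π)) := by
          rw [hgn t]
          constructor
          · linarith
          · nlinarith
        obtain ⟨u, huIoo, hu⟩ := intermediate_value_Ioo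
          (by linarith : t ≤ t + 2 * π) hhcont.continuousOn hmemIoo
        have hcoe : ((h u : ℝ) : Circ) = ((h t : ℝ) : Circ) := by
          rw [hu, AddCircle.coe_add_period]
        exact ⟨u, hdouble t u huIoo hcoe⟩
    · -- decreasing: n ≤ -1
      have hanti : StrictAnti h := strictAnti_of_deriv_neg hneg
      have hδneg : (n : ℝ) * (2 * π) < 0 := by
        have := hanti (show (0 : ℝ) < 0 + 2 * π by linarith)
        rw [hgn 0] at this
        linarith
      have hn1 : n ≤ -1 := by
        by_contra hcon
        push_neg at hcon
        have : (0 : ℝ) ≤ (n : ℝ) := by exact_mod_cast (by omega : 0 ≤ n)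
        nlinarith
      rcases eq_or_lt_of_le (show n ≤ -1 from hn1) with hone | _
      · right
        intro t
        rw [hgn t, hone]
        push_cast
        ring
      · by_cases hone : n = -1
        · right
          intro t
          rw [hgn t, hone]
          push_cast
          ring
        · exfalso
          apply CDaux.no_universal_double hF
          intro t
          have hn2 : (n : ℝ) ≤ -2 := by exact_mod_cast (by omega : n ≤ -2)
          have hmemIoo : h t - 2 * π ∈ Ioo (h (t + 2 * π)) (h t) := by
            rw [hgn t]
            constructor
            · nlinarith
            · linarith
          obtain ⟨u, huIoo, hu⟩ := intermediate_value_Ioo'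
            (by linarith : t ≤ t + 2 * π) hhcont.continuousOn hmemIoo
          have hcoe : ((h u : ℝ) : Circ) = ((h t : ℝ) : Circ) := by
            rw [hu, AddCircle.coe_sub, AddCircle.coe_period, sub_zero]
          exact ⟨u, hdouble t u huIoo hcoe⟩
  refine ⟨H, ⟨h, hhC1, hhd, hdeg, fun t => (hhlift t).symm⟩,
    funext (fun x => (hH x).1), fun x t s ht hs => (hH x).2 t s ht hs, ?_⟩
  rintro H' ⟨hc1, hc2⟩
  funext x
  exact hU x (H' x) ⟨hc1 x, fun t s ht hs => hc2 x t s ht hs⟩
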